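/- Exact second moments of the diagonal and off-diagonal parts: Assume the distribution of X_{11} is symmetric (X_{11} has the same distribution as −X_{11}) and non-degenerate with P(X_{11} = 0) = 0. Then for every 0 ≤ i ≤ p−1: E[U_{i+1}^2] = ((1 − n E[S_2^{(i)}])/(n−1)) (1 − n² β_4), and E[V_{i+1}^2] = 2 n² β_{2,2} (1/(n−i) − E[S_2^{(i)}]). -/

import Mathlib

open MeasureTheory ProbabilityTheory Filter Finset Matrix

noncomputable section

variable {Ω : Type*}

/-- The Euclidean norm of the first `n` entries of row `i` of the array `X`. -/
def rowNorm (X : ℕ → ℕ → Ω → ℝ) (n i : ℕ) (ω : Ω) : ℝ :=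
  Real.sqrt (∑ j ∈ Finset.range n, (X i j ω) ^ 2)

/-- The self-normalized entries `Y_{ij} = X_{ij} / sqrt(X_{i1}² + ⋯ + X_{in}²)`. -/
def Ynorm (X : ℕ → ℕ → Ω → ℝ) (n i j : ℕ) (ω : Ω) : ℝ :=
  X i j ω / rowNorm X n i ω

/-- `B_{(i)}`: the `i × n` matrix whose rows are the first `i` rows of `X`. -/
def Bmat (X : ℕ → ℕ → Ω → ℝ) (n i : ℕ) (ω : Ω) : Matrix (Fin i) (Fin n) ℝ :=
  Matrix.of fun a b => X a.val b.val ω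

/-- The projection `P_i = I_n − B_{(i)}ᵀ (B_{(i)} B_{(i)}ᵀ)⁻¹ B_{(i)}` (so `P_0 = I_n`). -/
def Pmat (X : ℕ → ℕ → Ω → ℝ) (n i : ℕ) (ω : Ω) : Matrix (Fin n) (Fin n) ℝ :=
  1 - (Bmat X n i ω)ᵀ * (Bmat X n i ω * (Bmat X n i ω)ᵀ)⁻¹ * Bmat X n i ω

/-- `Q_i = P_i / (n − i)`. -/
def qmat (X : ℕ → ℕ → Ω → ℝ) (n i : ℕ) (ω : Ω) : Matrix (Fin n) (Fin n) ℝ :=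
  ((n : ℝ) - (i : ℝ))⁻¹ • Pmat X n i ω

/-- The diagonal part `U_{i+1} = ∑_j q_{i,jj} (n Y_{i+1,j}² − 1)` (rows indexed from 0, so the
row used here is row `i`, which is independent of the first `i` rows). -/
def Udiag (X : ℕ → ℕ → Ω → ℝ) (n i : ℕ) (ω : Ω) : ℝ :=
  ∑ j : Fin n, qmat X n i ω j j * ((n : ℝ) * (Ynorm X n i j.val ω) ^ 2 - 1)

/-- The off-diagonal part `V_{i+1} = ∑_{k≠l} q_{i,kl} · n Y_{i+1,k} Y_{i+1,l}`. -/
def Voff (X : ℕ → ℕ → Ω → ℝ) (n i : ℕ) (ω : Ω) : ℝ :=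
  ∑ k : Fin n, ∑ l : Fin n,
    if k ≠ l then qmat X n i ω k l * ((n : ℝ) * Ynorm X n i k.val ω * Ynorm X n i l.val ω)
    else 0

/-- `Z̃_{i+1} = (n b̃_{i+1}ᵀ P_i b̃_{i+1} − (n − i)) / (n − i)` where `b̃_{i+1}` is the
self-normalized row `i` (0-based). -/
def Ztil (X : ℕ → ℕ → Ω → ℝ) (n i : ℕ) (ω : Ω) : ℝ :=
  ((n : ℝ) * ∑ k : Fin n, ∑ l : Fin n,
      Ynorm X n i k.val ω * Pmat X n i ω k l * Ynorm X n i l.val ω - ((n : ℝ) - (i : ℝ))) /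
    ((n : ℝ) - (i : ℝ))

/-- `L : (0,∞) → (0,∞)` is slowly varying at infinity. -/
def SlowlyVarying (L : ℝ → ℝ) : Prop :=
  (∀ x > 0, 0 < L x) ∧ ∀ t > 0, Tendsto (fun x => L (t * x) / L x) atTop (nhds 1)

/-- σ-algebra generated by the first `i` rows (of length `n`) of `X`. -/
def rowSigma (X : ℕ → ℕ → Ω → ℝ) (n i : ℕ) : MeasurableSpace Ω :=
  ⨆ ab : Fin i × Fin n, MeasurableSpace.comap (fun ω => X ab.1.val ab.2.val ω) inferInstance


namespace SM

variable {i n : ℕ}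

/-- abstract projector from a matrix -/
def proj (B : Matrix (Fin i) (Fin n) ℝ) : Matrix (Fin n) (Fin n) ℝ :=
  1 - Bᵀ * (B * Bᵀ)⁻¹ * B

lemma proj_symm (B : Matrix (Fin i) (Fin n) ℝ) : (proj B)ᵀ = proj B := by
  unfold proj
  have h1 : ((B * Bᵀ)⁻¹)ᵀ = (B * Bᵀ)⁻¹ := by
    rw [Matrix.transpose_nonsing_inv, Matrix.transpose_mul, Matrix.transpose_transpose]
  simp [Matrix.transpose_sub, Matrix.transpose_mul, h1, Matrix.mul_assoc]

lemma proj_idem {B : Matrix (Fin i) (Fin n) ℝ} (h : IsUnit (B * Bᵀ).det) :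
    proj B * proj B = proj B := by
  unfold proj
  have key : (Bᵀ * (B * Bᵀ)⁻¹ * B) * (Bᵀ * (B * Bᵀ)⁻¹ * B) = Bᵀ * (B * Bᵀ)⁻¹ * B := by
    have : (B * Bᵀ)⁻¹ * (B * Bᵀ) = 1 := Matrix.nonsing_inv_mul _ h
    calc (Bᵀ * (B * Bᵀ)⁻¹ * B) * (Bᵀ * (B * Bᵀ)⁻¹ * B)
        = Bᵀ * (((B * Bᵀ)⁻¹ * (B * Bᵀ)) * ((B * Bᵀ)⁻¹ * B)) := by
          simp only [Matrix.mul_assoc]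
      _ = Bᵀ * (B * Bᵀ)⁻¹ * B := by rw [this, Matrix.one_mul, Matrix.mul_assoc]
  simp only [Matrix.sub_mul, Matrix.mul_sub, Matrix.one_mul, Matrix.mul_one, key]
  abel

lemma proj_trace {B : Matrix (Fin i) (Fin n) ℝ} (h : IsUnit (B * Bᵀ).det) :
    (proj B).trace = (n : ℝ) - i := by
  unfold proj
  have h2 : (Bᵀ * (B * Bᵀ)⁻¹ * B).trace = (i : ℝ) := by
    rw [Matrix.trace_mul_comm, ← Matrix.mul_assoc, Matrix.mul_nonsing_inv _ h]
    simp
  rw [Matrix.trace_sub, h2, Matrix.trace_one]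
  simp

lemma proj_diag_eq_sq {B : Matrix (Fin i) (Fin n) ℝ} (h : IsUnit (B * Bᵀ).det) (k : Fin n) :
    proj B k k = ∑ l, (proj B k l) ^ 2 := by
  conv_lhs => rw [← proj_idem h]
  rw [Matrix.mul_apply]
  refine Finset.sum_congr rfl fun l _ => ?_
  have : proj B l k = proj B k l := by
    conv_lhs => rw [← proj_symm B]
    rfl
  rw [this]; ring

lemma proj_entry_abs_le {B : Matrix (Fin i) (Fin n) ℝ} (h : IsUnit (B * Bᵀ).det) (k l : Fin n) :
    |proj B k l| ≤ 1 := by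
  have hdiag : ∀ m : Fin n, proj B m m ≤ 1 := by
    intro m
    have h1 := proj_diag_eq_sq h m
    have h2 : (proj B m m) ^ 2 ≤ ∑ l, (proj B m l) ^ 2 :=
      Finset.single_le_sum (f := fun l => (proj B m l)^2) (fun _ _ => sq_nonneg _) (mem_univ m)
    nlinarith [sq_nonneg (proj B m m - 1)]
  have h1 := proj_diag_eq_sq h k
  have h2 : (proj B k l) ^ 2 ≤ ∑ l', (proj B k l') ^ 2 :=
    Finset.single_le_sum (f := fun l' => (proj B k l')^2) (fun _ _ => sq_nonneg _) (mem_univ l)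
  have : (proj B k l)^2 ≤ 1 := le_trans h2 (h1 ▸ hdiag k)
  nlinarith [abs_nonneg (proj B k l), sq_abs (proj B k l)]

lemma proj_sq_sum {B : Matrix (Fin i) (Fin n) ℝ} (h : IsUnit (B * Bᵀ).det) :
    ∑ k, ∑ l, (proj B k l) ^ 2 = (n : ℝ) - i := by
  have : ∀ k : Fin n, ∑ l, (proj B k l)^2 = proj B k k := fun k => (proj_diag_eq_sq h k).symm
  calc ∑ k, ∑ l, (proj B k l) ^ 2 = ∑ k, proj B k k := by
        exact Finset.sum_congr rfl fun k _ => this k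
    _ = (proj B).trace := rfl
    _ = (n : ℝ) - i := proj_trace h

/- measurability of entries -/
variable {Ω' : Type*} [MeasurableSpace Ω']

lemma measurable_det {m : ℕ} {f : Ω' → Matrix (Fin m) (Fin m) ℝ}
    (hf : ∀ a b, Measurable fun ω => f ω a b) : Measurable fun ω => (f ω).det := by
  simp_rw [Matrix.det_apply]
  refine Finset.measurable_sum _ fun σ _ => ?_
  exact (Finset.measurable_prod _ fun a _ => hf _ _).const_smul (Equiv.Perm.sign σ)

lemma measurable_inv_entry {m : ℕ} {f : Ω' → Matrix (Fin m) (Fin m) ℝ}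
    (hf : ∀ a b, Measurable fun ω => f ω a b) (a b : Fin m) :
    Measurable fun ω => (f ω)⁻¹ a b := by
  simp_rw [Matrix.inv_def, Matrix.smul_apply, Matrix.adjugate_apply, Ring.inverse_eq_inv,
    smul_eq_mul]
  refine Measurable.mul ((measurable_det hf).inv) (measurable_det ?_)
  intro x y
  simp_rw [Matrix.updateRow_apply]
  by_cases hx : x = b
  · simp [hx]
  · simp only [hx, if_false]; exact hf x y

lemma measurable_proj_entry {f : Ω' → Matrix (Fin i) (Fin n) ℝ}
    (hf : ∀ a b, Measurable fun ω => f ω a b) (k l : Fin n) :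
    Measurable fun ω => proj (f ω) k l := by
  unfold proj
  have hBBt : ∀ a b, Measurable fun ω => (f ω * (f ω)ᵀ) a b := by
    intro a b
    simp_rw [Matrix.mul_apply, Matrix.transpose_apply]
    exact Finset.measurable_sum _ fun c _ => (hf a c).mul (hf b c)
  have hinv := measurable_inv_entry hBBt
  simp only [Matrix.sub_apply, Matrix.mul_apply, Matrix.transpose_apply]
  refine (measurable_const.sub ?_)
  refine Finset.measurable_sum _ fun c _ => ?_
  refine Measurable.mul ?_ (hf c l)
  exact Finset.measurable_sum _ fun d _ => (hf d k).mul (hinv d c)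



section YvPart
variable {n : ℕ}
/-- self-normalized vector -/
def yv {n : ℕ} (x : Fin n → ℝ) (j : Fin n) : ℝ := x j / Real.sqrt (∑ k, x k ^ 2)

variable {n : ℕ}

lemma yv_abs_le (x : Fin n → ℝ) (j : Fin n) : |yv x j| ≤ 1 := by
  unfold yv
  have hS : (0:ℝ) ≤ ∑ k, x k ^ 2 := Finset.sum_nonneg fun _ _ => sq_nonneg _
  have h1 : |x j| ≤ Real.sqrt (∑ k, x k ^ 2) := by
    rw [← Real.sqrt_sq_eq_abs]
    exact Real.sqrt_le_sqrt (Finset.single_le_sum (f := fun k => x k ^2)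
      (fun _ _ => sq_nonneg _) (mem_univ j))
  rcases eq_or_lt_of_le (Real.sqrt_nonneg (∑ k, x k ^ 2)) with h | h
  · simp [← h]
  · rw [abs_div, abs_of_pos h, div_le_one h]; exact h1

lemma measurable_yv (j : Fin n) : Measurable fun x : Fin n → ℝ => yv x j := by
  unfold yv
  exact (measurable_pi_apply j).div
    ((Finset.measurable_sum _ fun k _ => (measurable_pi_apply k).pow_const 2).sqrt)

lemma yv_perm (σ : Equiv.Perm (Fin n)) (x : Fin n → ℝ) (j : Fin n) :
    yv (x ∘ σ) j = yv x (σ j) := by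
  unfold yv
  have : ∑ k, (x ∘ σ) k ^ 2 = ∑ k, x k ^ 2 := by
    exact Equiv.sum_comp σ fun k => x k ^ 2
  rw [this]; rfl

lemma yv_flip (s : Fin n → ℝ) (hs : ∀ j, s j = 1 ∨ s j = -1) (x : Fin n → ℝ) (j : Fin n) :
    yv (fun k => s k * x k) j = s j * yv x j := by
  unfold yv
  have : ∑ k, (s k * x k) ^ 2 = ∑ k, x k ^ 2 := by
    refine Finset.sum_congr rfl fun k _ => ?_
    rcases hs k with h | h <;> rw [h] <;> ring
  rw [this, mul_div_assoc]

lemma exists_perm {j k j0 j1 : Fin n} (hjk : j ≠ k) (h01 : j0 ≠ j1) :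
    ∃ σ : Equiv.Perm (Fin n), σ j0 = j ∧ σ j1 = k := by
  classical
  set τ : Equiv.Perm (Fin n) := Equiv.swap j0 j with hτ
  set τ' : Equiv.Perm (Fin n) := Equiv.swap j1 (τ.symm k) with hτ'
  refine ⟨τ'.trans τ, ?_, ?_⟩
  · have h1 : τ' j0 = j0 := by
      apply Equiv.swap_apply_of_ne_of_ne h01
      intro hh
      have : k = τ j0 := by rw [hh]; simp
      rw [hτ, Equiv.swap_apply_left] at this
      exact hjk this.symm
    simp [Equiv.trans_apply, h1, hτ, Equiv.swap_apply_left]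
  · simp [Equiv.trans_apply, hτ', Equiv.swap_apply_left]

variable (ν : Measure ℝ) [IsProbabilityMeasure ν]

/-- integral of a bounded measurable function is fine -/
lemma integrable_of_bound {α : Type*} [MeasurableSpace α] (μ : Measure α) [IsFiniteMeasure μ]
    {f : α → ℝ} (hm : AEStronglyMeasurable f μ) (C : ℝ) (h : ∀ᵐ x ∂μ, |f x| ≤ C) :
    Integrable f μ :=
  Integrable.mono' (integrable_const C) hm (by simpa [Real.norm_eq_abs] using h)

lemma integral_comp_mp {α : Type*} [MeasurableSpace α] {μ : Measure α} {T : α → α}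
    (hT : MeasurePreserving T μ μ) {g : α → ℝ} (hg : AEStronglyMeasurable g μ) :
    ∫ x, g (T x) ∂μ = ∫ x, g x ∂μ := by
  conv_rhs => rw [← hT.map_eq]
  rw [integral_map hT.measurable.aemeasurable (by rwa [hT.map_eq])]

/-- permutation invariance of the iid product measure -/
lemma perm_mp (σ : Equiv.Perm (Fin n)) :
    MeasurePreserving (fun x : Fin n → ℝ => x ∘ σ) (Measure.pi fun _ => ν)
      (Measure.pi fun _ => ν) := by
  have h := measurePreserving_piCongrLeft (fun _ : Fin n => ν) σ.symm
  have : ⇑(MeasurableEquiv.piCongrLeft (fun _ : Fin n => ℝ) σ.symm)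
      = fun x : Fin n → ℝ => x ∘ σ := by
    funext x
    funext j
    simp [MeasurableEquiv.piCongrLeft, Equiv.piCongrLeft, Equiv.piCongrLeft',
      Function.comp]
  rwa [this] at h



-- sign choice pure lemma
lemma sign_choice {α : Type*} [DecidableEq α] {k l k' l' : α} (hkl : k ≠ l) (hkl' : k' ≠ l')
    (hne : ¬((k' = k ∧ l' = l) ∨ (k' = l ∧ l' = k))) :
    ∃ m : α, ((if k = m then (-1:ℝ) else 1) * (if l = m then (-1:ℝ) else 1))
      * ((if k' = m then (-1:ℝ) else 1) * (if l' = m then (-1:ℝ) else 1)) = -1 := by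
  push_neg at hne
  by_cases h1 : k' = k
  · -- then l' ≠ l, and pick m := l'
    have h2 : l' ≠ l := (hne.1 h1)
    refine ⟨l', ?_⟩
    have hk : k ≠ l' := fun h => hkl' (h1.trans h)
    simp [hk, h2.symm, (h1 ▸ hkl' : k' ≠ l')]
  · by_cases h3 : k' = l
    · -- then l' ≠ k; pick m := l'
      have h4 : l' ≠ k := (hne.2 h3)
      refine ⟨l', ?_⟩
      have hl : l ≠ l' := fun h => hkl' (h3.trans h)
      simp [h4.symm, hl, hkl']
    · -- k' ∉ {k, l}; pick m := k'
      refine ⟨k', ?_⟩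
      have : k ≠ k' := fun h => h1 h.symm
      have h5 : l ≠ k' := fun h => h3 h.symm
      simp [this, h5, hkl'.symm]

lemma abs_mul_le_one {a b : ℝ} (ha : |a| ≤ 1) (hb : |b| ≤ 1) : |a * b| ≤ 1 := by
  rw [abs_mul]; nlinarith [abs_nonneg a, abs_nonneg b]

section Moments
variable (ν : Measure ℝ) [IsProbabilityMeasure ν]

local notation "μ" => (Measure.pi fun _ : Fin n => ν)

lemma measurable_yvfun : Measurable fun x : Fin n → ℝ => (fun j => yv x j) :=
  measurable_pi_lambda _ measurable_yv

lemma flip_mp (hνs : ν.map (fun t => -t) = ν) (s : Fin n → ℝ)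
    (hs : ∀ j, s j = 1 ∨ s j = -1) :
    MeasurePreserving (fun (x : Fin n → ℝ) (j : Fin n) => s j * x j) μ μ := by
  refine measurePreserving_pi _ _ fun j => ?_
  rcases hs j with h | h
  · rw [h]
    have h1 : (fun t : ℝ => (1:ℝ) * t) = id := funext one_mul
    refine ⟨measurable_const_mul _, ?_⟩
    show Measure.map (fun t : ℝ => (1:ℝ) * t) ν = ν
    rw [h1, Measure.map_id]
  · rw [h]
    refine ⟨measurable_const_mul _, ?_⟩
    show Measure.map (fun t : ℝ => (-1:ℝ) * t) ν = ν
    have h1 : (fun t : ℝ => (-1:ℝ) * t) = fun t => -t := by funext t; ring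
    rw [h1, hνs]

lemma ae_pos (hn : 2 ≤ n) (hν0 : ν {0} = 0) :
    ∀ᵐ x : Fin n → ℝ ∂μ, 0 < ∑ k, x k ^ 2 := by
  have h0 : (0:ℕ) < n := by omega
  set j0 : Fin n := ⟨0, h0⟩ with hj0
  have hset : {x : Fin n → ℝ | x j0 = 0}
      = Set.univ.pi (fun j => if j = j0 then ({0} : Set ℝ) else Set.univ) := by
    ext x
    simp only [Set.mem_setOf_eq, Set.mem_pi, Set.mem_univ, forall_true_left]
    constructor
    · intro h j; by_cases hj : j = j0 <;> simp [hj, h]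
    · intro h; have := h j0; simpa using this
  have hz : μ {x : Fin n → ℝ | x j0 = 0} = 0 := by
    rw [hset, Measure.pi_pi]
    refine Finset.prod_eq_zero (mem_univ j0) ?_
    simp [hν0]
  have hae : ∀ᵐ x : Fin n → ℝ ∂μ, x j0 ≠ 0 := by
    rw [ae_iff]; push_neg; simpa using hz
  filter_upwards [hae] with x hx
  have h1 : 0 < x j0 ^ 2 := by positivity
  have h2 : x j0 ^ 2 ≤ ∑ k, x k ^ 2 :=
    Finset.single_le_sum (f := fun k => x k ^ 2) (fun _ _ => sq_nonneg _) (mem_univ j0)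
  linarith

lemma ae_sum_sq (hn : 2 ≤ n) (hν0 : ν {0} = 0) :
    ∀ᵐ x : Fin n → ℝ ∂μ, ∑ j, yv x j ^ 2 = 1 := by
  filter_upwards [ae_pos ν hn hν0] with x hx
  unfold yv
  have hs : Real.sqrt (∑ k, x k ^ 2) ^ 2 = ∑ k, x k ^ 2 := Real.sq_sqrt hx.le
  simp_rw [div_pow, hs, ← Finset.sum_div]
  exact div_self hx.ne'

lemma integrable_yv_g {g : (Fin n → ℝ) → ℝ} (hg : Measurable g)
    (hb : ∀ x : Fin n → ℝ, |g (fun j => yv x j)| ≤ 1) :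
    Integrable (fun x : Fin n → ℝ => g (fun j => yv x j)) μ :=
  integrable_of_bound μ ((hg.comp measurable_yvfun).aestronglyMeasurable) 1
    (Filter.Eventually.of_forall fun x => hb x)

lemma perm_integral (σ : Equiv.Perm (Fin n)) {g : (Fin n → ℝ) → ℝ} (hg : Measurable g) :
    ∫ x, g (fun j => yv x (σ j)) ∂μ = ∫ x, g (fun j => yv x j) ∂μ := by
  have hm : Measurable fun x : Fin n → ℝ => g (fun j => yv x j) :=
    hg.comp measurable_yvfun
  have h := integral_comp_mp (perm_mp ν σ) hm.aestronglyMeasurable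
  calc ∫ x, g (fun j => yv x (σ j)) ∂μ
      = ∫ x, g (fun j => yv (x ∘ σ) j) ∂μ := by
        refine integral_congr_ae (Filter.Eventually.of_forall fun x => ?_)
        show g (fun j => yv x (σ j)) = g (fun j => yv (x ∘ σ) j)
        simp only [yv_perm]
    _ = ∫ x, g (fun j => yv x j) ∂μ := h

lemma flip_integral (hνs : ν.map (fun t => -t) = ν) (s : Fin n → ℝ)
    (hs : ∀ j, s j = 1 ∨ s j = -1)
    {g : (Fin n → ℝ) → ℝ} (hg : Measurable g) :
    ∫ x, g (fun j => s j * yv x j) ∂μ = ∫ x, g (fun j => yv x j) ∂μ := by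
  have hm : Measurable fun x : Fin n → ℝ => g (fun j => yv x j) :=
    hg.comp measurable_yvfun
  have h := integral_comp_mp (flip_mp ν hνs s hs) hm.aestronglyMeasurable
  calc ∫ x, g (fun j => s j * yv x j) ∂μ
      = ∫ x, g (fun j => yv (fun k => s k * x k) j) ∂μ := by
        refine integral_congr_ae (Filter.Eventually.of_forall fun x => ?_)
        show g (fun j => s j * yv x j) = g (fun j => yv (fun k => s k * x k) j)
        simp only [yv_flip s hs]
    _ = ∫ x, g (fun j => yv x j) ∂μ := h


lemma mom_single (j j0 : Fin n) (m : ℕ) :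
    ∫ x, yv x j ^ m ∂μ = ∫ x, yv x j0 ^ m ∂μ := by
  have hg : Measurable fun v : Fin n → ℝ => v j0 ^ m := (measurable_pi_apply j0).pow_const m
  have h := perm_integral ν (Equiv.swap j0 j) hg
  simpa [Equiv.swap_apply_left] using h

lemma mom_pair {j k : Fin n} (j0 j1 : Fin n) (hjk : j ≠ k) (h01 : j0 ≠ j1) :
    ∫ x, yv x j ^ 2 * yv x k ^ 2 ∂μ = ∫ x, yv x j0 ^ 2 * yv x j1 ^ 2 ∂μ := by
  obtain ⟨σ, hσ0, hσ1⟩ := exists_perm hjk h01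
  have hg : Measurable fun v : Fin n → ℝ => v j0 ^ 2 * v j1 ^ 2 :=
    ((measurable_pi_apply j0).pow_const 2).mul ((measurable_pi_apply j1).pow_const 2)
  have h := perm_integral ν σ hg
  simpa [hσ0, hσ1] using h

lemma quad_zero (hνs : ν.map (fun t => -t) = ν) {k l k' l' : Fin n}
    (hkl : k ≠ l) (hkl' : k' ≠ l')
    (hne : ¬((k' = k ∧ l' = l) ∨ (k' = l ∧ l' = k))) :
    ∫ x, (yv x k * yv x l) * (yv x k' * yv x l') ∂μ = 0 := by
  classical
  obtain ⟨m, hm⟩ := sign_choice hkl hkl' hne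
  set s : Fin n → ℝ := fun j => if j = m then -1 else 1 with hsdef
  have hs : ∀ j, s j = 1 ∨ s j = -1 := by
    intro j; by_cases h : j = m <;> simp [hsdef, h]
  have hg : Measurable fun v : Fin n → ℝ => (v k * v l) * (v k' * v l') :=
    ((measurable_pi_apply k).mul (measurable_pi_apply l)).mul
      ((measurable_pi_apply k').mul (measurable_pi_apply l'))
  have h := flip_integral ν hνs s hs hg
  have hc : (s k * s l) * (s k' * s l') = -1 := by
    have h1 : s k = if k = m then (-1:ℝ) else 1 := rfl
    have h2 : s l = if l = m then (-1:ℝ) else 1 := rfl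
    have h3 : s k' = if k' = m then (-1:ℝ) else 1 := rfl
    have h4 : s l' = if l' = m then (-1:ℝ) else 1 := rfl
    rw [h1, h2, h3, h4]; exact hm
  have h2 : ∫ x, (s k * yv x k * (s l * yv x l)) * (s k' * yv x k' * (s l' * yv x l')) ∂μ
      = ∫ x, (yv x k * yv x l) * (yv x k' * yv x l') ∂μ := h
  have h3 : ∀ x : Fin n → ℝ,
      (s k * yv x k * (s l * yv x l)) * (s k' * yv x k' * (s l' * yv x l'))
        = -((yv x k * yv x l) * (yv x k' * yv x l')) := by
    intro x
    have : (s k * yv x k * (s l * yv x l)) * (s k' * yv x k' * (s l' * yv x l'))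
        = ((s k * s l) * (s k' * s l')) * ((yv x k * yv x l) * (yv x k' * yv x l')) := by ring
    rw [this, hc]; ring
  rw [integral_congr_ae (Filter.Eventually.of_forall h3), integral_neg] at h2
  linarith

lemma integral_sum_sq_one (hn : 2 ≤ n) (hν0 : ν {0} = 0) :
    ∫ x, ∑ j, yv x j ^ 2 ∂μ = 1 := by
  have h := ae_sum_sq ν hn hν0
  rw [integral_congr_ae (h.mono fun x hx => hx)]
  simp

lemma integrable_yv_sq (j : Fin n) : Integrable (fun x : Fin n → ℝ => yv x j ^ 2) μ := by
  refine integrable_yv_g ν ((measurable_pi_apply j).pow_const 2) fun x => ?_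
  have := yv_abs_le x j
  rw [abs_pow]
  calc |yv x j| ^ 2 ≤ 1 ^ 2 := pow_le_pow_left₀ (abs_nonneg _) this 2
    _ = 1 := one_pow 2

lemma integrable_yv_sq_sq (j k : Fin n) :
    Integrable (fun x : Fin n → ℝ => yv x j ^ 2 * yv x k ^ 2) μ := by
  refine integrable_yv_g ν (((measurable_pi_apply j).pow_const 2).mul
    ((measurable_pi_apply k).pow_const 2)) fun x => ?_
  refine abs_mul_le_one ?_ ?_ <;> rw [abs_pow]
  · calc |yv x j| ^ 2 ≤ 1 ^ 2 := pow_le_pow_left₀ (abs_nonneg _) (yv_abs_le x j) 2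
      _ = 1 := one_pow 2
  · calc |yv x k| ^ 2 ≤ 1 ^ 2 := pow_le_pow_left₀ (abs_nonneg _) (yv_abs_le x k) 2
      _ = 1 := one_pow 2

lemma mom2_val (hn : 2 ≤ n) (hν0 : ν {0} = 0) (j : Fin n) :
    ∫ x, yv x j ^ 2 ∂μ = 1 / n := by
  have h1 : ∫ x, ∑ j', yv x j' ^ 2 ∂μ = 1 := integral_sum_sq_one ν hn hν0
  rw [integral_finset_sum _ (fun j' _ => integrable_yv_sq ν j')] at h1
  have h2 : ∀ j' : Fin n, ∫ x, yv x j' ^ 2 ∂μ = ∫ x, yv x j ^ 2 ∂μ :=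
    fun j' => mom_single ν j' j 2
  rw [Finset.sum_congr rfl (fun j' _ => h2 j'), Finset.sum_const, Finset.card_univ,
    Fintype.card_fin, nsmul_eq_mul] at h1
  have hn0 : (n : ℝ) ≠ 0 := by positivity
  field_simp at h1 ⊢
  linarith

lemma mom_relation (hn : 2 ≤ n) (hν0 : ν {0} = 0) {j0 j1 : Fin n} (h01 : j0 ≠ j1) :
    (n : ℝ) * ∫ x, yv x j0 ^ 4 ∂μ
      + (n : ℝ) * ((n : ℝ) - 1) * ∫ x, yv x j0 ^ 2 * yv x j1 ^ 2 ∂μ = 1 := by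
  classical
  have h1 : ∫ x, (∑ j, yv x j ^ 2) ^ 2 ∂μ = 1 := by
    have h := ae_sum_sq ν hn hν0
    have h' : ∀ᵐ x : Fin n → ℝ ∂μ, (∑ j, yv x j ^ 2) ^ 2 = (1 : ℝ) :=
      h.mono fun x hx => by rw [hx]; norm_num
    rw [integral_congr_ae h']
    simp
  have hexp : ∀ x : Fin n → ℝ, (∑ j, yv x j ^ 2) ^ 2
      = ∑ j, ∑ k, yv x j ^ 2 * yv x k ^ 2 := by
    intro x; rw [sq, Finset.sum_mul_sum]
  rw [integral_congr_ae (Filter.Eventually.of_forall hexp)] at h1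
  rw [integral_finset_sum _ (fun j _ => integrable_finset_sum _
    (fun k _ => integrable_yv_sq_sq ν j k))] at h1
  have h2 : ∀ j : Fin n, ∫ x, ∑ k, yv x j ^ 2 * yv x k ^ 2 ∂μ
      = ∫ x, yv x j0 ^ 4 ∂μ + ((n : ℝ) - 1) * ∫ x, yv x j0 ^ 2 * yv x j1 ^ 2 ∂μ := by
    intro j
    rw [integral_finset_sum _ (fun k _ => integrable_yv_sq_sq ν j k)]
    rw [← Finset.add_sum_erase _ _ (mem_univ j)]
    have hdiag : ∫ x, yv x j ^ 2 * yv x j ^ 2 ∂μ = ∫ x, yv x j0 ^ 4 ∂μ := by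
      have : ∀ x : Fin n → ℝ, yv x j ^ 2 * yv x j ^ 2 = yv x j ^ 4 := fun x => by ring
      rw [integral_congr_ae (Filter.Eventually.of_forall this)]
      exact mom_single ν j j0 4
    have hoff : ∀ k ∈ univ.erase j, ∫ x, yv x j ^ 2 * yv x k ^ 2 ∂μ
        = ∫ x, yv x j0 ^ 2 * yv x j1 ^ 2 ∂μ := by
      intro k hk
      exact mom_pair ν j0 j1 (fun h => (Finset.mem_erase.mp hk).1 h.symm) h01
    rw [hdiag, Finset.sum_congr rfl hoff, Finset.sum_const, Finset.card_erase_of_mem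
      (mem_univ j), Finset.card_univ, Fintype.card_fin, nsmul_eq_mul]
    have hcast : ((n - 1 : ℕ) : ℝ) = (n : ℝ) - 1 := by
      have : 1 ≤ n := by omega
      push_cast [this]; ring
    rw [hcast]
  rw [Finset.sum_congr rfl (fun j _ => h2 j), Finset.sum_const, Finset.card_univ,
    Fintype.card_fin, nsmul_eq_mul] at h1
  ring_nf at h1 ⊢
  linarith

end Moments

end YvPart
section Main
variable [MeasurableSpace Ω] (P : Measure Ω) [IsProbabilityMeasure P]
    (X : ℕ → ℕ → Ω → ℝ) (n i : ℕ)

/-- law of one entry -/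
def nu : Measure ℝ := Measure.map (X 0 0) P

lemma nu_prob (hmeas : ∀ i j, Measurable (X i j)) : IsProbabilityMeasure (nu P X) :=
  Measure.isProbabilityMeasure_map (hmeas 0 0).aemeasurable

lemma nu_zero (hmeas : ∀ i j, Measurable (X i j)) (hzero : P {ω | X 0 0 ω = 0} = 0) : nu P X {0} = 0 := by
  rw [nu, Measure.map_apply (hmeas 0 0) (measurableSet_singleton 0)]
  exact hzero

lemma nu_symm (hmeas : ∀ i j, Measurable (X i j)) (hsymm : Measure.map (fun ω => -X 0 0 ω) P = Measure.map (X 0 0) P) : (nu P X).map (fun t => -t) = nu P X := by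
  rw [nu, Measure.map_map measurable_neg (hmeas 0 0)]
  exact hsymm

/-- the i-th row as a random vector -/
def rowv (r : ℕ) (ω : Ω) : Fin n → ℝ := fun j => X r j.val ω

lemma measurable_rowv (hmeas : ∀ i j, Measurable (X i j)) (r : ℕ) : Measurable (rowv X n r) :=
  measurable_pi_lambda _ fun j => hmeas r j.val

lemma rowLaw (hmeas : ∀ i j, Measurable (X i j))
    (hindep : iIndepFun (fun ij : ℕ × ℕ => X ij.1 ij.2) P)
    (hident : ∀ i j, Measure.map (X i j) P = Measure.map (X 0 0) P) (r : ℕ) :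
    P.map (rowv X n r) = Measure.pi (fun _ : Fin n => nu P X) := by
  haveI := nu_prob P X hmeas
  refine (Measure.pi_eq fun s hs => ?_).symm
  rw [Measure.map_apply (measurable_rowv X n hmeas r) (MeasurableSet.univ_pi hs)]
  have hpre : rowv X n r ⁻¹' Set.univ.pi s = ⋂ j ∈ (univ : Finset (Fin n)), X r j.val ⁻¹' s j := by
    ext ω
    simp [rowv, Set.mem_pi]
  rw [hpre]
  classical
  -- transfer to the ℕ×ℕ index
  set s' : ℕ → Set ℝ := fun m => if h : m < n then s ⟨m, h⟩ else Set.univ with hs'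
  set sets : ℕ × ℕ → Set ℝ := fun ab => if ab.1 = r then s' ab.2 else Set.univ with hsets
  set S' : Finset (ℕ × ℕ) := Finset.image (fun j : Fin n => (r, j.val)) univ with hS'
  have hinj : ∀ a ∈ (univ : Finset (Fin n)), ∀ b ∈ (univ : Finset (Fin n)),
      (fun j : Fin n => (r, j.val)) a = (fun j : Fin n => (r, j.val)) b → a = b := by
    intro a _ b _ hab
    exact Fin.ext (by simpa using congrArg Prod.snd hab)
  have hmem : ∀ j : Fin n, sets (r, j.val) = s j := by
    intro j
    simp [hsets, hs', j.isLt]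
  have hiInter : (⋂ j ∈ (univ : Finset (Fin n)), X r j.val ⁻¹' s j)
      = ⋂ ab ∈ S', (fun ij : ℕ × ℕ => X ij.1 ij.2) ab ⁻¹' sets ab := by
    ext ω
    simp only [Set.mem_iInter, hS', Finset.mem_image, Finset.mem_univ, true_and]
    constructor
    · rintro h ab ⟨j, rfl⟩
      simpa [hmem j] using h j
    · intro h j
      have := h (r, j.val) ⟨j, rfl⟩
      simpa [hmem j] using this
    
  rw [hiInter, hindep.measure_inter_preimage_eq_mul S' (fun ab _ => ?_)]
  · rw [Finset.prod_image hinj]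
    refine Finset.prod_congr rfl fun j _ => ?_
    rw [hmem j, ← Measure.map_apply (hmeas r j.val) (hs j), hident r j.val]
    rfl
  · -- measurability of sets ab
    rw [hsets]
    dsimp only
    split
    · rw [hs']
      dsimp only
      split
      · exact hs _
      · exact MeasurableSet.univ
    · exact MeasurableSet.univ


lemma Pmat_eq_proj (ω : Ω) : Pmat X n i ω = proj (Bmat X n i ω) := rfl

lemma measurable_Bmat_entry (hmeas : ∀ i j, Measurable (X i j)) (a : Fin i) (b : Fin n) :
    Measurable fun ω => Bmat X n i ω a b := hmeas a.val b.val

lemma measurable_q_entry (hmeas : ∀ i j, Measurable (X i j)) (k l : Fin n) :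
    Measurable fun ω => qmat X n i ω k l := by
  have h : Measurable fun ω => Pmat X n i ω k l := by
    simp only [Pmat_eq_proj]
    exact measurable_proj_entry (measurable_Bmat_entry X n i hmeas) k l
  simpa [qmat] using h.const_mul (((n : ℝ) - (i : ℝ))⁻¹)

/-- key independence lemma -/
lemma indep_fn (hmeas : ∀ i j, Measurable (X i j))
    (hindep : iIndepFun (fun ij : ℕ × ℕ => X ij.1 ij.2) P)
    (φ : (Fin i → Fin n → ℝ) → ℝ) (hφ : Measurable φ)
    (g : (Fin n → ℝ) → ℝ) (hg : Measurable g) :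
    IndepFun (fun ω => φ (fun a b => X a.val b.val ω)) (fun ω => g (rowv X n i ω)) P := by
  classical
  set Sfin : Finset (ℕ × ℕ) := (Finset.range i) ×ˢ (Finset.range n) with hSfin
  set Tfin : Finset (ℕ × ℕ) := {i} ×ˢ (Finset.range n) with hTfin
  have hdis : Disjoint Sfin Tfin := by
    rw [Finset.disjoint_left]
    rintro ⟨a, b⟩ hS hT
    rw [hSfin, Finset.mem_product, Finset.mem_range] at hS
    rw [hTfin, Finset.mem_product, Finset.mem_singleton] at hT
    omega
  have base := hindep.indepFun_finset Sfin Tfin hdis (fun ij => hmeas ij.1 ij.2)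
  have hmemS : ∀ (a : Fin i) (b : Fin n), ((a.val, b.val) : ℕ × ℕ) ∈ Sfin := by
    intro a b
    rw [hSfin, Finset.mem_product, Finset.mem_range, Finset.mem_range]
    exact ⟨a.isLt, b.isLt⟩
  have hmemT : ∀ (b : Fin n), ((i, b.val) : ℕ × ℕ) ∈ Tfin := by
    intro b
    rw [hTfin, Finset.mem_product, Finset.mem_singleton, Finset.mem_range]
    exact ⟨rfl, b.isLt⟩
  set Φ : ({x // x ∈ Sfin} → ℝ) → ℝ :=
    fun v => φ (fun a b => v ⟨(a.val, b.val), hmemS a b⟩) with hΦ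
  set Ψ : ({x // x ∈ Tfin} → ℝ) → ℝ :=
    fun w => g (fun b => w ⟨(i, b.val), hmemT b⟩) with hΨ
  have hΦm : Measurable Φ := by
    refine hφ.comp ?_
    exact measurable_pi_lambda _ fun a => measurable_pi_lambda _ fun b => measurable_pi_apply _
  have hΨm : Measurable Ψ := by
    refine hg.comp ?_
    exact measurable_pi_lambda _ fun b => measurable_pi_apply _
  have h := base.comp hΦm hΨm
  have e1 : (Φ ∘ fun ω (ab : {x // x ∈ Sfin}) => X (ab : ℕ × ℕ).1 (ab : ℕ × ℕ).2 ω)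
      = fun ω => φ (fun a b => X a.val b.val ω) := rfl
  have e2 : (Ψ ∘ fun ω (ab : {x // x ∈ Tfin}) => X (ab : ℕ × ℕ).1 (ab : ℕ × ℕ).2 ω)
      = fun ω => g (rowv X n i ω) := rfl
  rwa [e1, e2] at h

/-- the factorization of expectations -/
lemma factor (hmeas : ∀ i j, Measurable (X i j))
    (hindep : iIndepFun (fun ij : ℕ × ℕ => X ij.1 ij.2) P)
    (hident : ∀ i j, Measure.map (X i j) P = Measure.map (X 0 0) P)
    (φ : (Fin i → Fin n → ℝ) → ℝ) (hφ : Measurable φ)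
    (g : (Fin n → ℝ) → ℝ) (hg : Measurable g) :
    ∫ ω, φ (fun a b => X a.val b.val ω) * g (rowv X n i ω) ∂P
      = (∫ ω, φ (fun a b => X a.val b.val ω) ∂P)
        * ∫ x, g x ∂(Measure.pi fun _ : Fin n => nu P X) := by
  have hBm : Measurable fun ω => (fun (a : Fin i) (b : Fin n) => X a.val b.val ω) := by
    refine measurable_pi_lambda _ fun a => measurable_pi_lambda _ fun b => ?_
    exact hmeas a.val b.val
  have h1 : Measurable fun ω => φ (fun a b => X a.val b.val ω) := hφ.comp hBm
  have h2 : Measurable fun ω => g (rowv X n i ω) := hg.comp (measurable_rowv X n hmeas i)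
  have hind := indep_fn P X n i hmeas hindep φ hφ g hg
  have := hind.integral_mul_eq_mul_integral h1.aestronglyMeasurable h2.aestronglyMeasurable
  have hmul : (fun ω => φ (fun a b => X a.val b.val ω) * g (rowv X n i ω))
      = (fun ω => φ (fun a b => X a.val b.val ω)) * (fun ω => g (rowv X n i ω)) := rfl
  rw [hmul, this]
  congr 1
  rw [← rowLaw P X n hmeas hindep hident i,
    integral_map (measurable_rowv X n hmeas i).aemeasurable]
  rw [rowLaw P X n hmeas hindep hident i]
  exact hg.aestronglyMeasurable


lemma ynorm_eq (r : ℕ) (j : Fin n) (ω : Ω) :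
    Ynorm X n r j.val ω = yv (rowv X n r ω) j := by
  unfold Ynorm rowNorm yv rowv
  rw [Fin.sum_univ_eq_sum_range (fun k => X r k ω ^ 2) n]

lemma integral_row (hmeas : ∀ i j, Measurable (X i j))
    (hindep : iIndepFun (fun ij : ℕ × ℕ => X ij.1 ij.2) P)
    (hident : ∀ i j, Measure.map (X i j) P = Measure.map (X 0 0) P)
    (r : ℕ) {g : (Fin n → ℝ) → ℝ} (hg : Measurable g) :
    ∫ ω, g (rowv X n r ω) ∂P = ∫ x, g x ∂(Measure.pi fun _ : Fin n => nu P X) := by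
  rw [← rowLaw P X n hmeas hindep hident r,
    integral_map (measurable_rowv X n hmeas r).aemeasurable]
  rw [rowLaw P X n hmeas hindep hident r]
  exact hg.aestronglyMeasurable

section ASfacts

lemma q_eq (ω : Ω) (k l : Fin n) :
    qmat X n i ω k l = ((n : ℝ) - i)⁻¹ * proj (Bmat X n i ω) k l := by
  simp [qmat, Pmat_eq_proj, Matrix.smul_apply]

lemma q_symm (ω : Ω) (k l : Fin n) : qmat X n i ω k l = qmat X n i ω l k := by
  rw [q_eq, q_eq]
  have := proj_symm (Bmat X n i ω)
  have h2 : proj (Bmat X n i ω) k l = proj (Bmat X n i ω) l k := by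
    conv_lhs => rw [← this]
    rfl
  rw [h2]

lemma ni_pos (hin : i < n) : (0:ℝ) < (n : ℝ) - i := by
  have : (i:ℝ) < n := by exact_mod_cast hin
  linarith

lemma q_bound (hin : i < n) {ω : Ω} (hdet : IsUnit (Bmat X n i ω * (Bmat X n i ω)ᵀ).det) (k l : Fin n) :
    |qmat X n i ω k l| ≤ ((n : ℝ) - i)⁻¹ := by
  rw [q_eq, abs_mul, abs_of_pos (inv_pos.mpr (ni_pos n i hin))]
  calc ((n:ℝ) - i)⁻¹ * |proj (Bmat X n i ω) k l| ≤ ((n:ℝ)-i)⁻¹ * 1 := by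
        exact mul_le_mul_of_nonneg_left (proj_entry_abs_le hdet k l)
          (le_of_lt (inv_pos.mpr (ni_pos n i hin)))
    _ = ((n:ℝ)-i)⁻¹ := mul_one _

lemma q_diag_sum (hin : i < n) {ω : Ω} (hdet : IsUnit (Bmat X n i ω * (Bmat X n i ω)ᵀ).det) :
    ∑ l, qmat X n i ω l l = 1 := by
  have h : ∑ l, qmat X n i ω l l = ((n:ℝ)-i)⁻¹ * (proj (Bmat X n i ω)).trace := by
    rw [Matrix.trace, Finset.mul_sum]
    exact Finset.sum_congr rfl fun l _ => q_eq X n i ω l l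
  rw [h, proj_trace hdet]
  exact inv_mul_cancel₀ (ne_of_gt (ni_pos n i hin))

lemma q_sq_sum (hin : i < n) {ω : Ω} (hdet : IsUnit (Bmat X n i ω * (Bmat X n i ω)ᵀ).det) :
    ∑ k, ∑ l, qmat X n i ω k l ^ 2 = ((n:ℝ) - i)⁻¹ := by
  have h : ∀ k l, qmat X n i ω k l ^ 2
      = (((n:ℝ)-i)⁻¹)^2 * proj (Bmat X n i ω) k l ^ 2 := by
    intro k l; rw [q_eq]; ring
  simp_rw [h, ← Finset.mul_sum]
  rw [proj_sq_sum hdet]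
  have hpos := ni_pos n i hin
  rw [sq, mul_assoc, inv_mul_cancel₀ (ne_of_gt hpos), mul_one]

end ASfacts

lemma abs_mul_le {a b A B : ℝ} (ha : |a| ≤ A) (hb : |b| ≤ B) : |a * b| ≤ A * B := by
  rw [abs_mul]
  exact mul_le_mul ha hb (abs_nonneg b) (le_trans (abs_nonneg a) ha)

section Big
variable (hmeas : ∀ i j, Measurable (X i j))
    (hindep : iIndepFun (fun ij : ℕ × ℕ => X ij.1 ij.2) P)
    (hident : ∀ i j, Measure.map (X i j) P = Measure.map (X 0 0) P)
    (hsymm : Measure.map (fun ω => -X 0 0 ω) P = Measure.map (X 0 0) P)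
    (hzero : P {ω | X 0 0 ω = 0} = 0)
    (hn : 2 ≤ n) (hin : i < n)
    (hasinv : ∀ᵐ ω ∂P, (Bmat X n i ω * (Bmat X n i ω)ᵀ).det ≠ 0)

include hmeas hindep hident hsymm hzero hn hin hasinv in
lemma U_moment :
    ∫ ω, (Udiag X n i ω) ^ 2 ∂P =
      (1 - (n : ℝ) * ∫ ω, ∑ l, qmat X n i ω l l ^ 2 ∂P) / ((n : ℝ) - 1) *
        (1 - (n : ℝ) ^ 2 * ∫ x, yv x (⟨0, by omega⟩ : Fin n) ^ 4
            ∂(Measure.pi fun _ : Fin n => nu P X)) := by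
  classical
  haveI := nu_prob P X hmeas
  set μn := (Measure.pi fun _ : Fin n => nu P X) with hμn
  haveI : IsProbabilityMeasure μn := by rw [hμn]; infer_instance
  set j0 : Fin n := ⟨0, by omega⟩ with hj0
  set j1 : Fin n := ⟨1, by omega⟩ with hj1
  have h01 : j0 ≠ j1 := by
    intro h
    have := congrArg Fin.val h
    simp [hj0, hj1] at this
  set m4 : ℝ := ∫ x, yv x j0 ^ 4 ∂μn with hm4
  set m22 : ℝ := ∫ x, yv x j0 ^ 2 * yv x j1 ^ 2 ∂μn with hm22
  set A : ℝ := ∫ ω, ∑ l, qmat X n i ω l l ^ 2 ∂P with hA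
  set c : ℝ := ((n : ℝ) - i)⁻¹ with hc
  have hcpos : 0 < c := inv_pos.mpr (ni_pos n i hin)
  have hnn : (n : ℝ) ≠ 0 := by positivity
  have hdet : ∀ᵐ ω ∂P, IsUnit (Bmat X n i ω * (Bmat X n i ω)ᵀ).det := by
    filter_upwards [hasinv] with ω h using isUnit_iff_ne_zero.mpr h
  -- the row functions
  set g : Fin n → (Fin n → ℝ) → ℝ := fun j x => (n : ℝ) * yv x j ^ 2 - 1 with hg
  have hgm : ∀ j, Measurable (g j) := fun j =>
    (((measurable_yv j).pow_const 2).const_mul _).sub measurable_const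
  have hgb : ∀ j x, |g j x| ≤ (n : ℝ) + 1 := by
    intro j x
    have h1 : |yv x j| ≤ 1 := yv_abs_le x j
    have h2 : (0:ℝ) ≤ yv x j ^ 2 := sq_nonneg _
    have h3 : yv x j ^ 2 ≤ 1 := by
      rw [← sq_abs]
      nlinarith [abs_nonneg (yv x j)]
    rw [hg]
    simp only
    rw [abs_sub_comm, abs_le]
    constructor <;> nlinarith
  -- pointwise expansion
  have hU : ∀ ω, (Udiag X n i ω) ^ 2
      = ∑ j, ∑ k, (qmat X n i ω j j * qmat X n i ω k k)
          * (g j (rowv X n i ω) * g k (rowv X n i ω)) := by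
    intro ω
    have h1 : Udiag X n i ω = ∑ j, qmat X n i ω j j * g j (rowv X n i ω) := by
      unfold Udiag
      refine Finset.sum_congr rfl fun j _ => ?_
      rw [ynorm_eq X n i j ω]
    rw [h1, sq, Finset.sum_mul_sum]
    exact Finset.sum_congr rfl fun j _ => Finset.sum_congr rfl fun k _ => by ring
  -- measurability and integrability
  have hqm : ∀ k l : Fin n, Measurable fun ω => qmat X n i ω k l :=
    measurable_q_entry X n i hmeas
  have htm : ∀ j k : Fin n, Measurable fun ω =>
      (qmat X n i ω j j * qmat X n i ω k k) * (g j (rowv X n i ω) * g k (rowv X n i ω)) := by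
    intro j k
    exact ((hqm j j).mul (hqm k k)).mul
      (((hgm j).comp (measurable_rowv X n hmeas i)).mul
        ((hgm k).comp (measurable_rowv X n hmeas i)))
  have hti : ∀ j k : Fin n, Integrable (fun ω =>
      (qmat X n i ω j j * qmat X n i ω k k) * (g j (rowv X n i ω) * g k (rowv X n i ω))) P := by
    intro j k
    refine integrable_of_bound P (htm j k).aestronglyMeasurable
      ((c * c) * (((n:ℝ)+1) * ((n:ℝ)+1))) ?_
    filter_upwards [hdet] with ω h
    exact abs_mul_le (abs_mul_le (q_bound X n i hin h j j) (q_bound X n i hin h k k))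
      (abs_mul_le (hgb j _) (hgb k _))
  -- split the integral
  have hsplit : ∫ ω, (Udiag X n i ω) ^ 2 ∂P
      = ∑ j, ∑ k, ∫ ω, (qmat X n i ω j j * qmat X n i ω k k)
          * (g j (rowv X n i ω) * g k (rowv X n i ω)) ∂P := by
    rw [integral_congr_ae (Filter.Eventually.of_forall hU)]
    rw [integral_finset_sum _ (fun j _ => integrable_finset_sum _ (fun k _ => hti j k))]
    exact Finset.sum_congr rfl fun j _ => integral_finset_sum _ (fun k _ => hti j k)
  -- factor each term
  have hφm : ∀ j k : Fin n, Measurable (fun v : Fin i → Fin n → ℝ =>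
      (c * proj (Matrix.of v) j j) * (c * proj (Matrix.of v) k k)) := by
    intro j k
    have hent : ∀ (a : Fin i) (b : Fin n),
        Measurable fun v : Fin i → Fin n → ℝ => (Matrix.of v) a b := by
      intro a b
      exact (measurable_pi_apply a).comp measurable_id |>.eval
    have h1 := measurable_proj_entry (f := fun v : Fin i → Fin n → ℝ => Matrix.of v) hent j j
    have h2 := measurable_proj_entry (f := fun v : Fin i → Fin n → ℝ => Matrix.of v) hent k k
    exact (h1.const_mul c).mul (h2.const_mul c)
  have hfact : ∀ j k : Fin n, ∫ ω, (qmat X n i ω j j * qmat X n i ω k k)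
        * (g j (rowv X n i ω) * g k (rowv X n i ω)) ∂P
      = (∫ ω, qmat X n i ω j j * qmat X n i ω k k ∂P) * ∫ x, g j x * g k x ∂μn := by
    intro j k
    have h := factor P X n i hmeas hindep hident
      (fun v => (c * proj (Matrix.of v) j j) * (c * proj (Matrix.of v) k k)) (hφm j k)
      (fun x => g j x * g k x) ((hgm j).mul (hgm k))
    exact h
  -- row-side moments
  have hν0 := nu_zero P X hmeas hzero
  have hmom : ∀ j k : Fin n, ∫ x, g j x * g k x ∂μn
      = ((n:ℝ)^2 * m22 - 1) + (if j = k then (n:ℝ)^2 * (m4 - m22) else 0) := by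
    intro j k
    by_cases hjk : j = k
    · subst hjk
      have hpt : ∀ x : Fin n → ℝ, g j x * g j x
          = (n:ℝ)^2 * (yv x j ^2 * yv x j ^2) - (2*(n:ℝ)) * yv x j ^2 + 1 := by
        intro x; rw [hg]; ring
      rw [integral_congr_ae (Filter.Eventually.of_forall hpt)]
      have hint1 : Integrable (fun x => (n:ℝ)^2 * (yv x j ^2 * yv x j ^2)) μn :=
        (integrable_yv_sq_sq (nu P X) j j).const_mul _
      have hint2 : Integrable (fun x => (2*(n:ℝ)) * yv x j ^2) μn :=
        (integrable_yv_sq (nu P X) j).const_mul _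
      have hint12 : Integrable (fun x => (n:ℝ)^2 * (yv x j ^2 * yv x j ^2)
          - (2*(n:ℝ)) * yv x j ^2) μn := hint1.sub hint2
      rw [integral_add hint12 (integrable_const 1),
        integral_sub hint1 hint2, integral_const_mul, integral_const_mul, integral_const]
      have e1 : ∫ x, yv x j ^2 * yv x j ^2 ∂μn = m4 := by
        have hh : ∀ x : Fin n → ℝ, yv x j ^2 * yv x j ^2 = yv x j ^4 := fun x => by ring
        rw [integral_congr_ae (Filter.Eventually.of_forall hh), hm4]
        exact mom_single (nu P X) j j0 4
      have e2 : ∫ x, yv x j ^2 ∂μn = 1/(n:ℝ) := mom2_val (nu P X) hn hν0 j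
      rw [e1, e2]
      simp only [measure_univ, ENNReal.toReal_one, probReal_univ, smul_eq_mul, mul_one, if_pos rfl, ↓reduceIte]
      field_simp
      ring
    · have hpt : ∀ x : Fin n → ℝ, g j x * g k x
          = (n:ℝ)^2 * (yv x j ^2 * yv x k ^2)
            - ((n:ℝ) * yv x j ^2 + (n:ℝ) * yv x k ^2) + 1 := by
        intro x; rw [hg]; ring
      rw [integral_congr_ae (Filter.Eventually.of_forall hpt)]
      have hint1 : Integrable (fun x => (n:ℝ)^2 * (yv x j ^2 * yv x k ^2)) μn :=
        (integrable_yv_sq_sq (nu P X) j k).const_mul _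
      have hint2 : Integrable (fun x => (n:ℝ) * yv x j ^2 + (n:ℝ) * yv x k ^2) μn :=
        ((integrable_yv_sq (nu P X) j).const_mul _).add
          ((integrable_yv_sq (nu P X) k).const_mul _)
      have hint12 : Integrable (fun x => (n:ℝ)^2 * (yv x j ^2 * yv x k ^2)
          - ((n:ℝ) * yv x j ^2 + (n:ℝ) * yv x k ^2)) μn := hint1.sub hint2
      rw [integral_add hint12 (integrable_const 1),
        integral_sub hint1 hint2, integral_const_mul,
        integral_add ((integrable_yv_sq (nu P X) j).const_mul _)
          ((integrable_yv_sq (nu P X) k).const_mul _),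
        integral_const_mul, integral_const_mul, integral_const]
      have e1 : ∫ x, yv x j ^2 * yv x k ^2 ∂μn = m22 := by
        rw [hm22]; exact mom_pair (nu P X) j0 j1 hjk h01
      have e2 : ∫ x, yv x j ^2 ∂μn = 1/(n:ℝ) := mom2_val (nu P X) hn hν0 j
      have e3 : ∫ x, yv x k ^2 ∂μn = 1/(n:ℝ) := mom2_val (nu P X) hn hν0 k
      rw [e1, e2, e3]
      simp only [measure_univ, ENNReal.toReal_one, probReal_univ, smul_eq_mul, mul_one, if_neg hjk]
      field_simp
      ring
  -- integrability of the q-products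
  have hE2int : ∀ j k : Fin n, Integrable (fun ω => qmat X n i ω j j * qmat X n i ω k k) P := by
    intro j k
    refine integrable_of_bound P ((hqm j j).mul (hqm k k)).aestronglyMeasurable (c*c) ?_
    filter_upwards [hdet] with ω h
    exact abs_mul_le (q_bound X n i hin h j j) (q_bound X n i hin h k k)
  have hsum1 : ∑ j : Fin n, ∑ k : Fin n, ∫ ω, qmat X n i ω j j * qmat X n i ω k k ∂P = 1 := by
    have h1 : ∀ j : Fin n, ∑ k : Fin n, ∫ ω, qmat X n i ω j j * qmat X n i ω k k ∂P
        = ∫ ω, ∑ k : Fin n, qmat X n i ω j j * qmat X n i ω k k ∂P := fun j =>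
      (integral_finset_sum _ fun k _ => hE2int j k).symm
    rw [Finset.sum_congr rfl fun j _ => h1 j,
      ← integral_finset_sum _ (fun j _ => integrable_finset_sum _ fun k _ => hE2int j k)]
    have h2 : ∀ᵐ ω ∂P, ∑ j : Fin n, ∑ k : Fin n,
        qmat X n i ω j j * qmat X n i ω k k = (1:ℝ) := by
      filter_upwards [hdet] with ω h
      rw [← Finset.sum_mul_sum]
      rw [q_diag_sum X n i hin h]
      norm_num
    rw [integral_congr_ae h2]
    simp
  have hsum2 : ∑ j : Fin n, ∫ ω, qmat X n i ω j j * qmat X n i ω j j ∂P = A := by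
    rw [← integral_finset_sum _ (fun j _ => hE2int j j), hA]
    refine integral_congr_ae (Filter.Eventually.of_forall fun ω => ?_)
    exact Finset.sum_congr rfl fun j _ => (sq (qmat X n i ω j j)).symm
  -- combine
  have hfinal : ∫ ω, (Udiag X n i ω) ^ 2 ∂P
      = ((n:ℝ)^2 * m22 - 1) + (n:ℝ)^2 * (m4 - m22) * A := by
    rw [hsplit]
    have hterm : ∀ j k : Fin n, ∫ ω, (qmat X n i ω j j * qmat X n i ω k k)
          * (g j (rowv X n i ω) * g k (rowv X n i ω)) ∂P
        = (∫ ω, qmat X n i ω j j * qmat X n i ω k k ∂P) * ((n:ℝ)^2 * m22 - 1)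
          + (if j = k then (∫ ω, qmat X n i ω j j * qmat X n i ω k k ∂P)
              * ((n:ℝ)^2 * (m4 - m22)) else 0) := by
      intro j k
      rw [hfact j k, hmom j k]
      by_cases h : j = k <;> simp [h] <;> ring
    rw [Finset.sum_congr rfl fun j _ => Finset.sum_congr rfl fun k _ => hterm j k]
    have hrw : ∀ j : Fin n, ∑ k : Fin n,
        ((∫ ω, qmat X n i ω j j * qmat X n i ω k k ∂P) * ((n:ℝ)^2 * m22 - 1)
          + (if j = k then (∫ ω, qmat X n i ω j j * qmat X n i ω k k ∂P)
              * ((n:ℝ)^2 * (m4 - m22)) else 0))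
        = (∑ k : Fin n, ∫ ω, qmat X n i ω j j * qmat X n i ω k k ∂P) * ((n:ℝ)^2 * m22 - 1)
          + (∫ ω, qmat X n i ω j j * qmat X n i ω j j ∂P) * ((n:ℝ)^2 * (m4 - m22)) := by
      intro j
      rw [Finset.sum_add_distrib, ← Finset.sum_mul]
      congr 1
      simp
    rw [Finset.sum_congr rfl fun j _ => hrw j, Finset.sum_add_distrib, ← Finset.sum_mul,
      hsum1, ← Finset.sum_mul, hsum2]
    ring
  rw [hfinal]
  have hrel := mom_relation (nu P X) hn hν0 h01
  rw [← hm4, ← hm22] at hrel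
  have hn1 : (n : ℝ) - 1 ≠ 0 := by
    have h2 : (2:ℝ) ≤ (n:ℝ) := by exact_mod_cast hn
    linarith
  rw [div_mul_eq_mul_div, eq_div_iff hn1]
  linear_combination ((n:ℝ) - (n:ℝ) * A) * hrel

include hmeas hindep hident hsymm hzero hn hin hasinv in
lemma V_moment :
    ∫ ω, (Voff X n i ω) ^ 2 ∂P =
      2 * (n : ℝ) ^ 2 * (∫ x, yv x (⟨0, by omega⟩ : Fin n) ^ 2 * yv x (⟨1, by omega⟩ : Fin n) ^ 2
          ∂(Measure.pi fun _ : Fin n => nu P X)) *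
        (1 / ((n : ℝ) - i) - ∫ ω, ∑ l, qmat X n i ω l l ^ 2 ∂P) := by
  classical
  haveI := nu_prob P X hmeas
  set μn := (Measure.pi fun _ : Fin n => nu P X) with hμn
  haveI : IsProbabilityMeasure μn := by rw [hμn]; infer_instance
  set j0 : Fin n := ⟨0, by omega⟩ with hj0
  set j1 : Fin n := ⟨1, by omega⟩ with hj1
  have h01 : j0 ≠ j1 := by
    intro h
    have := congrArg Fin.val h
    simp [hj0, hj1] at this
  set m22 : ℝ := ∫ x, yv x j0 ^ 2 * yv x j1 ^ 2 ∂μn with hm22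
  set A : ℝ := ∫ ω, ∑ l, qmat X n i ω l l ^ 2 ∂P with hA
  set c : ℝ := ((n : ℝ) - i)⁻¹ with hc
  have hν0 := nu_zero P X hmeas hzero
  have hνs := nu_symm P X hmeas hsymm
  have hdet : ∀ᵐ ω ∂P, IsUnit (Bmat X n i ω * (Bmat X n i ω)ᵀ).det := by
    filter_upwards [hasinv] with ω h using isUnit_iff_ne_zero.mpr h
  have hqm : ∀ k l : Fin n, Measurable fun ω => qmat X n i ω k l :=
    measurable_q_entry X n i hmeas
  -- row factors
  set g : Fin n → Fin n → (Fin n → ℝ) → ℝ :=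
    fun k l x => (n : ℝ) * yv x k * yv x l with hg
  have hgm : ∀ k l, Measurable (g k l) := fun k l =>
    (((measurable_yv k).const_mul _).mul (measurable_yv l))
  have hgb : ∀ k l x, |g k l x| ≤ (n : ℝ) := by
    intro k l x
    rw [hg]
    simp only
    have h1 := yv_abs_le x k
    have h2 := yv_abs_le x l
    have hnn : (0:ℝ) ≤ (n:ℝ) := by positivity
    calc |(n:ℝ) * yv x k * yv x l| = (n:ℝ) * |yv x k| * |yv x l| := by
          rw [abs_mul, abs_mul, abs_of_nonneg hnn]
      _ ≤ (n:ℝ) * 1 * 1 := by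
          refine mul_le_mul (mul_le_mul le_rfl h1 (abs_nonneg _) hnn) h2 (abs_nonneg _) ?_
          positivity
      _ = (n:ℝ) := by ring
  -- the elementary terms
  set e : Fin n → Fin n → Ω → ℝ := fun k l ω =>
    if k ≠ l then qmat X n i ω k l * g k l (rowv X n i ω) else 0 with he
  have hVpt : ∀ ω, Voff X n i ω = ∑ k, ∑ l, e k l ω := by
    intro ω
    unfold Voff
    refine Finset.sum_congr rfl fun k _ => Finset.sum_congr rfl fun l _ => ?_
    rw [he]
    simp only
    by_cases h : k ≠ l
    · rw [if_pos h, if_pos h, hg]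
      simp only
      rw [ynorm_eq X n i k ω, ynorm_eq X n i l ω]
    · rw [if_neg h, if_neg h]
  have hem : ∀ k l, Measurable (e k l) := by
    intro k l
    rw [he]
    simp only
    by_cases h : k ≠ l
    · simp only [if_pos h]
      exact (hqm k l).mul ((hgm k l).comp (measurable_rowv X n hmeas i))
    · simp only [if_neg h]
      exact measurable_const
  have heb : ∀ᵐ ω ∂P, ∀ k l, |e k l ω| ≤ c * (n:ℝ) := by
    filter_upwards [hdet] with ω h
    intro k l
    rw [he]
    simp only
    by_cases hkl : k ≠ l
    · rw [if_pos hkl]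
      exact abs_mul_le (q_bound X n i hin h k l) (hgb k l _)
    · rw [if_neg hkl]
      simp only [abs_zero]
      have hcpos : 0 < c := inv_pos.mpr (ni_pos n i hin)
      have : (0:ℝ) ≤ (n:ℝ) := by positivity
      exact mul_nonneg hcpos.le this
  have hprodint : ∀ k l k' l' : Fin n,
      Integrable (fun ω => e k l ω * e k' l' ω) P := by
    intro k l k' l'
    refine integrable_of_bound P ((hem k l).mul (hem k' l')).aestronglyMeasurable
      ((c*(n:ℝ)) * (c*(n:ℝ))) ?_
    filter_upwards [heb] with ω h
    exact abs_mul_le (h k l) (h k' l')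
  -- expand the square of the sum
  have hsplit : ∫ ω, (Voff X n i ω) ^ 2 ∂P
      = ∑ k, ∑ l, ∑ k', ∑ l', ∫ ω, e k l ω * e k' l' ω ∂P := by
    have hpt : ∀ ω, (Voff X n i ω) ^ 2
        = ∑ k, ∑ l, ∑ k', ∑ l', e k l ω * e k' l' ω := by
      intro ω
      rw [hVpt ω, sq, Finset.sum_mul_sum]
      refine Finset.sum_congr rfl fun k _ => ?_
      calc ∑ k', (∑ l, e k l ω) * (∑ l', e k' l' ω)
          = ∑ k', ∑ l, ∑ l', e k l ω * e k' l' ω := by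
            refine Finset.sum_congr rfl fun k' _ => ?_
            rw [Finset.sum_mul_sum]
        _ = ∑ l, ∑ k', ∑ l', e k l ω * e k' l' ω := Finset.sum_comm
    rw [integral_congr_ae (Filter.Eventually.of_forall hpt)]
    rw [integral_finset_sum _ (fun k _ => integrable_finset_sum _ (fun l _ =>
      integrable_finset_sum _ (fun k' _ => integrable_finset_sum _ (fun l' _ =>
        hprodint k l k' l'))))]
    refine Finset.sum_congr rfl fun k _ => ?_
    rw [integral_finset_sum _ (fun l _ => integrable_finset_sum _ (fun k' _ =>
      integrable_finset_sum _ (fun l' _ => hprodint k l k' l')))]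
    refine Finset.sum_congr rfl fun l _ => ?_
    rw [integral_finset_sum _ (fun k' _ => integrable_finset_sum _ (fun l' _ =>
      hprodint k l k' l'))]
    exact Finset.sum_congr rfl fun k' _ => integral_finset_sum _ (fun l' _ => hprodint k l k' l')
  -- factor a generic nonzero term
  have hφm : ∀ k l k' l' : Fin n, Measurable (fun v : Fin i → Fin n → ℝ =>
      (c * proj (Matrix.of v) k l) * (c * proj (Matrix.of v) k' l')) := by
    intro k l k' l'
    have hent : ∀ (a : Fin i) (b : Fin n),
        Measurable fun v : Fin i → Fin n → ℝ => (Matrix.of v) a b := by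
      intro a b
      exact (measurable_pi_apply a).comp measurable_id |>.eval
    exact ((measurable_proj_entry hent k l).const_mul c).mul
      ((measurable_proj_entry hent k' l').const_mul c)
  have hterm : ∀ k l k' l' : Fin n, k ≠ l → k' ≠ l' →
      ∫ ω, e k l ω * e k' l' ω ∂P
        = (∫ ω, qmat X n i ω k l * qmat X n i ω k' l' ∂P)
          * ((n:ℝ)^2 * ∫ x, (yv x k * yv x l) * (yv x k' * yv x l') ∂μn) := by
    intro k l k' l' hkl hkl'
    have hpt : ∀ ω, e k l ω * e k' l' ω
        = (qmat X n i ω k l * qmat X n i ω k' l')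
          * (g k l (rowv X n i ω) * g k' l' (rowv X n i ω)) := by
      intro ω
      rw [he]
      simp only [if_pos hkl, if_pos hkl']
      ring
    rw [integral_congr_ae (Filter.Eventually.of_forall hpt)]
    have h := factor P X n i hmeas hindep hident
      (fun v => (c * proj (Matrix.of v) k l) * (c * proj (Matrix.of v) k' l'))
      (hφm k l k' l')
      (fun x => g k l x * g k' l' x) ((hgm k l).mul (hgm k' l'))
    have h' : ∫ ω, (qmat X n i ω k l * qmat X n i ω k' l')
          * (g k l (rowv X n i ω) * g k' l' (rowv X n i ω)) ∂P
        = (∫ ω, qmat X n i ω k l * qmat X n i ω k' l' ∂P)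
          * ∫ x, g k l x * g k' l' x ∂μn := h
    rw [h']
    congr 1
    have hpt2 : ∀ x : Fin n → ℝ, g k l x * g k' l' x
        = (n:ℝ)^2 * ((yv x k * yv x l) * (yv x k' * yv x l')) := by
      intro x; rw [hg]; ring
    rw [integral_congr_ae (Filter.Eventually.of_forall hpt2), integral_const_mul]
  -- integrability of the q-products
  have hqint : ∀ k l k' l' : Fin n,
      Integrable (fun ω => qmat X n i ω k l * qmat X n i ω k' l') P := by
    intro k l k' l'
    refine integrable_of_bound P ((hqm k l).mul (hqm k' l')).aestronglyMeasurable (c*c) ?_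
    filter_upwards [hdet] with ω h
    exact abs_mul_le (q_bound X n i hin h k l) (q_bound X n i hin h k' l')
  -- inner reduction for k ≠ l
  have hinner : ∀ k l : Fin n, k ≠ l →
      ∑ k', ∑ l', ∫ ω, e k l ω * e k' l' ω ∂P
        = (2 * ((n:ℝ)^2 * m22)) * ∫ ω, qmat X n i ω k l * qmat X n i ω k l ∂P := by
    intro k l hkl
    have hdiagval : ∫ ω, e k l ω * e k l ω ∂P
        = (∫ ω, qmat X n i ω k l * qmat X n i ω k l ∂P) * ((n:ℝ)^2 * m22) := by
      rw [hterm k l k l hkl hkl]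
      congr 2
      have hpt : ∀ x : Fin n → ℝ, (yv x k * yv x l) * (yv x k * yv x l)
          = yv x k ^2 * yv x l ^2 := fun x => by ring
      rw [integral_congr_ae (Filter.Eventually.of_forall hpt), hm22]
      exact mom_pair (nu P X) j0 j1 hkl h01
    have hswapval : ∫ ω, e k l ω * e l k ω ∂P
        = (∫ ω, qmat X n i ω k l * qmat X n i ω k l ∂P) * ((n:ℝ)^2 * m22) := by
      rw [hterm k l l k hkl (Ne.symm hkl)]
      have e1 : ∫ ω, qmat X n i ω k l * qmat X n i ω l k ∂P
          = ∫ ω, qmat X n i ω k l * qmat X n i ω k l ∂P := by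
        refine integral_congr_ae (Filter.Eventually.of_forall fun ω => ?_)
        show qmat X n i ω k l * qmat X n i ω l k = qmat X n i ω k l * qmat X n i ω k l
        rw [q_symm X n i ω l k]
      have e2 : ∫ x, (yv x k * yv x l) * (yv x l * yv x k) ∂μn = m22 := by
        have hpt : ∀ x : Fin n → ℝ, (yv x k * yv x l) * (yv x l * yv x k)
            = yv x k ^2 * yv x l ^2 := fun x => by ring
        rw [integral_congr_ae (Filter.Eventually.of_forall hpt), hm22]
        exact mom_pair (nu P X) j0 j1 hkl h01
      rw [e1, e2]
    have hzt : ∀ k' l' : Fin n, (k', l') ≠ (k, l) → (k', l') ≠ (l, k) →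
        ∫ ω, e k l ω * e k' l' ω ∂P = 0 := by
      intro k' l' h1 h2
      by_cases hkl' : k' = l'
      · have hpt : ∀ ω, e k l ω * e k' l' ω = 0 := by
          intro ω
          have : e k' l' ω = 0 := by rw [he]; simp [hkl']
          rw [this, mul_zero]
        rw [integral_congr_ae (Filter.Eventually.of_forall hpt), integral_zero]
      · rw [hterm k l k' l' hkl hkl']
        have hne : ¬((k' = k ∧ l' = l) ∨ (k' = l ∧ l' = k)) := by
          rintro (⟨rfl, rfl⟩ | ⟨rfl, rfl⟩)
          · exact h1 rfl
          · exact h2 rfl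
        rw [quad_zero (nu P X) hνs hkl hkl' hne]
        ring
    have hpairne : ((k, l) : Fin n × Fin n) ≠ (l, k) := by
      intro h
      exact hkl (congrArg Prod.fst h)
    have hconv : ∑ k', ∑ l', ∫ ω, e k l ω * e k' l' ω ∂P
        = ∑ p ∈ ({(k, l), (l, k)} : Finset (Fin n × Fin n)),
            ∫ ω, e k l ω * e p.1 p.2 ω ∂P := by
      rw [← Finset.sum_product']
      refine (Finset.sum_subset ?_ ?_).symm
      · intro p _
        exact Finset.mem_product.mpr ⟨mem_univ _, mem_univ _⟩
      · intro p _ hp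
        simp only [Finset.mem_insert, Finset.mem_singleton] at hp
        push_neg at hp
        exact hzt p.1 p.2 hp.1 hp.2
    rw [hconv, Finset.sum_insert (by simp [hpairne]), Finset.sum_singleton]
    simp only
    rw [hdiagval, hswapval]
    ring
  -- outer terms with k = l vanish
  have houter0 : ∀ k l : Fin n, k = l →
      ∑ k', ∑ l', ∫ ω, e k l ω * e k' l' ω ∂P = 0 := by
    intro k l h
    have hpt : ∀ k' l' : Fin n, ∫ ω, e k l ω * e k' l' ω ∂P = 0 := by
      intro k' l'
      have h0 : ∀ ω, e k l ω * e k' l' ω = 0 := by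
        intro ω
        have : e k l ω = 0 := by rw [he]; simp [h]
        rw [this, zero_mul]
      rw [integral_congr_ae (Filter.Eventually.of_forall h0), integral_zero]
    simp [hpt]
  -- full and diagonal q-square sums
  have hEfull : ∑ k : Fin n, ∑ l : Fin n, ∫ ω, qmat X n i ω k l * qmat X n i ω k l ∂P = c := by
    have h1 : ∀ k : Fin n, ∑ l : Fin n, ∫ ω, qmat X n i ω k l * qmat X n i ω k l ∂P
        = ∫ ω, ∑ l : Fin n, qmat X n i ω k l * qmat X n i ω k l ∂P := fun k =>
      (integral_finset_sum _ fun l _ => hqint k l k l).symm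
    rw [Finset.sum_congr rfl fun k _ => h1 k,
      ← integral_finset_sum _ (fun k _ => integrable_finset_sum _ fun l _ => hqint k l k l)]
    have h2 : ∀ᵐ ω ∂P, ∑ k : Fin n, ∑ l : Fin n,
        qmat X n i ω k l * qmat X n i ω k l = c := by
      filter_upwards [hdet] with ω h
      rw [hc]
      rw [← q_sq_sum X n i hin h]
      exact Finset.sum_congr rfl fun k _ => Finset.sum_congr rfl fun l _ => (sq _).symm
    rw [integral_congr_ae h2]
    simp
  have hEdiag : ∑ k : Fin n, ∫ ω, qmat X n i ω k k * qmat X n i ω k k ∂P = A := by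
    rw [← integral_finset_sum _ (fun k _ => hqint k k k k), hA]
    refine integral_congr_ae (Filter.Eventually.of_forall fun ω => ?_)
    exact Finset.sum_congr rfl fun k _ => (sq (qmat X n i ω k k)).symm
  -- assemble
  rw [hsplit]
  have hterm2 : ∀ k l : Fin n, ∑ k', ∑ l', ∫ ω, e k l ω * e k' l' ω ∂P
      = (2 * ((n:ℝ)^2 * m22)) * (∫ ω, qmat X n i ω k l * qmat X n i ω k l ∂P)
        - (if k = l then (2 * ((n:ℝ)^2 * m22))
            * (∫ ω, qmat X n i ω k l * qmat X n i ω k l ∂P) else 0) := by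
    intro k l
    by_cases h : k = l
    · rw [houter0 k l h, if_pos h]
      ring
    · rw [hinner k l h, if_neg h]
      ring
  rw [Finset.sum_congr rfl fun k _ => Finset.sum_congr rfl fun l _ => hterm2 k l]
  have hstep : ∀ k : Fin n, ∑ l : Fin n,
      ((2 * ((n:ℝ)^2 * m22)) * (∫ ω, qmat X n i ω k l * qmat X n i ω k l ∂P)
        - (if k = l then (2 * ((n:ℝ)^2 * m22))
            * (∫ ω, qmat X n i ω k l * qmat X n i ω k l ∂P) else 0))
      = (2 * ((n:ℝ)^2 * m22)) * (∑ l : Fin n, ∫ ω, qmat X n i ω k l * qmat X n i ω k l ∂P)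
        - (2 * ((n:ℝ)^2 * m22)) * (∫ ω, qmat X n i ω k k * qmat X n i ω k k ∂P) := by
    intro k
    rw [Finset.sum_sub_distrib, ← Finset.mul_sum]
    congr 1
    simp
  rw [Finset.sum_congr rfl fun k _ => hstep k, Finset.sum_sub_distrib, ← Finset.mul_sum,
    ← Finset.mul_sum, Finset.sum_congr rfl (fun k _ => rfl), hEdiag]
  have : ∑ k : Fin n, ∑ l : Fin n, ∫ ω, qmat X n i ω k l * qmat X n i ω k l ∂P = c := hEfull
  rw [this, hc, one_div]
  ring
end Big
end Main

end SM

/-- Exact second moments of the diagonal and off-diagonal parts. -/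
theorem second_moments_exact
    [MeasurableSpace Ω] (P : Measure Ω) [IsProbabilityMeasure P]
    (X : ℕ → ℕ → Ω → ℝ)
    (hmeas : ∀ i j, Measurable (X i j))
    (hindep : iIndepFun (fun ij : ℕ × ℕ => X ij.1 ij.2) P)
    (hident : ∀ i j, Measure.map (X i j) P = Measure.map (X 0 0) P)
    (hsymm : Measure.map (fun ω => -X 0 0 ω) P = Measure.map (X 0 0) P)
    (hnondeg : ¬ ∃ c : ℝ, ∀ᵐ ω ∂P, X 0 0 ω = c)
    (hzero : P {ω | X 0 0 ω = 0} = 0)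
    (n p i : ℕ) (hn : 2 ≤ n) (hpn : p ≤ n) (hi : i < p)
    (hasinv : ∀ᵐ ω ∂P, (Bmat X n i ω * (Bmat X n i ω)ᵀ).det ≠ 0) :
    ∫ ω, (Udiag X n i ω) ^ 2 ∂P =
      (1 - (n : ℝ) * ∫ ω, ∑ l : Fin n, (qmat X n i ω l l) ^ 2 ∂P) / ((n : ℝ) - 1) *
        (1 - (n : ℝ) ^ 2 * ∫ ω, (Ynorm X n 0 0 ω) ^ 4 ∂P) ∧
    ∫ ω, (Voff X n i ω) ^ 2 ∂P =
      2 * (n : ℝ) ^ 2 * (∫ ω, (Ynorm X n 0 0 ω) ^ 2 * (Ynorm X n 0 1 ω) ^ 2 ∂P) *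
        (1 / ((n : ℝ) - i) - ∫ ω, ∑ l : Fin n, (qmat X n i ω l l) ^ 2 ∂P) := by
  classical
  have hin : i < n := by omega
  have hn0 : 0 < n := by omega
  have h1n : (1:ℕ) < n := by omega
  haveI := SM.nu_prob P X hmeas
  have hY4 : ∫ ω, (Ynorm X n 0 0 ω) ^ 4 ∂P
      = ∫ x, SM.yv x (⟨0, hn0⟩ : Fin n) ^ 4
          ∂(Measure.pi fun _ : Fin n => SM.nu P X) := by
    have hpt : ∀ ω, (Ynorm X n 0 0 ω) ^ 4
        = SM.yv (SM.rowv X n 0 ω) (⟨0, hn0⟩ : Fin n) ^ 4 :=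
      fun ω => congrArg (· ^ 4) (SM.ynorm_eq X n 0 (⟨0, hn0⟩ : Fin n) ω)
    rw [integral_congr_ae (Filter.Eventually.of_forall hpt)]
    exact SM.integral_row P X n hmeas hindep hident 0 ((SM.measurable_yv _).pow_const 4)
  have hY22 : ∫ ω, (Ynorm X n 0 0 ω) ^ 2 * (Ynorm X n 0 1 ω) ^ 2 ∂P
      = ∫ x, SM.yv x (⟨0, hn0⟩ : Fin n) ^ 2 * SM.yv x (⟨1, h1n⟩ : Fin n) ^ 2
          ∂(Measure.pi fun _ : Fin n => SM.nu P X) := by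
    have hpt : ∀ ω, (Ynorm X n 0 0 ω) ^ 2 * (Ynorm X n 0 1 ω) ^ 2
        = SM.yv (SM.rowv X n 0 ω) (⟨0, hn0⟩ : Fin n) ^ 2
          * SM.yv (SM.rowv X n 0 ω) (⟨1, h1n⟩ : Fin n) ^ 2 := by
      intro ω
      have e0 := SM.ynorm_eq X n 0 (⟨0, hn0⟩ : Fin n) ω
      have e1 := SM.ynorm_eq X n 0 (⟨1, h1n⟩ : Fin n) ω
      rw [show Ynorm X n 0 0 ω = SM.yv (SM.rowv X n 0 ω) (⟨0, hn0⟩ : Fin n) from e0,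
        show Ynorm X n 0 1 ω = SM.yv (SM.rowv X n 0 ω) (⟨1, h1n⟩ : Fin n) from e1]
    rw [integral_congr_ae (Filter.Eventually.of_forall hpt)]
    exact SM.integral_row P X n hmeas hindep hident 0
      (((SM.measurable_yv _).pow_const 2).mul ((SM.measurable_yv _).pow_const 2))
  constructor
  · rw [hY4]
    exact SM.U_moment P X n i hmeas hindep hident hsymm hzero hn hin hasinv
  · rw [hY22]
    exact SM.V_moment P X n i hmeas hindep hident hsymm hzero hn hin hasinv
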